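/- Let T and S be monads on the category Type u of sets and let E be a set. Define the monad T(- + E) whose underlying functor sends a set X to T(X ⊕ E), with unit x ↦ η^T(inl x) and multiplication μ^T ∘ T([id, η^T ∘ inr]) (the exception monad transformer applied to T). If the forgetful functor from TAlg(T,S) to Type u has a left adjoint (i.e., the tensor T ⊗ S exists), then the forgetful functor from TAlg(T(- + E), S) to Type u has a left adjoint (i.e., the tensor T(- + E) ⊗ S exists). -/

import Mathlib

open CategoryTheory

universe u

/-- A `(T,S)`-tensor algebra: a set with Eilenberg–Moore algebra structures for both
monads, satisfying the tensor law. -/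
structure TensorAlg (T S : Monad (Type u)) where
  carrier : Type u
  α : T.obj carrier → carrier
  β : S.obj carrier → carrier
  α_unit : ∀ x : carrier, α (T.η.app carrier x) = x
  α_mul : ∀ m : T.obj (T.obj carrier), α (T.μ.app carrier m) = α (T.map (↾α) m)
  β_unit : ∀ x : carrier, β (S.η.app carrier x) = x
  β_mul : ∀ m : S.obj (S.obj carrier), β (S.μ.app carrier m) = β (S.map (↾β) m)
  tensor_law : ∀ {Y Z : Type u} (p : T.obj Y) (q : S.obj Z) (f : Y × Z → carrier),
    α (T.map (↾fun y => β (S.map (↾fun z => f (y, z)) q)) p) =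
      β (S.map (↾fun z => α (T.map (↾fun y => f (y, z)) p)) q)

/-- Morphisms of tensor algebras: maps homomorphic for both structures. -/
@[ext]
structure TensorAlgHom {T S : Monad (Type u)} (A B : TensorAlg T S) where
  toFun : A.carrier → B.carrier
  map_α : ∀ m : T.obj A.carrier, toFun (A.α m) = B.α (T.map (↾toFun) m)
  map_β : ∀ m : S.obj A.carrier, toFun (A.β m) = B.β (S.map (↾toFun) m)

instance TensorAlg.instCategory {T S : Monad (Type u)} : Category (TensorAlg T S) where
  Hom A B := TensorAlgHom A B
  id A :=
    { toFun := id
      map_α := fun m => by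
        show A.α m = A.α (T.map (𝟙 A.carrier) m)
        rw [Functor.map_id_apply]
      map_β := fun m => by
        show A.β m = A.β (S.map (𝟙 A.carrier) m)
        rw [Functor.map_id_apply] }
  comp {A B C} f g :=
    { toFun := g.toFun ∘ f.toFun
      map_α := fun m => by
        show g.toFun (f.toFun (A.α m)) = C.α (T.map (↾(g.toFun ∘ f.toFun)) m)
        rw [f.map_α, g.map_α]
        congr 1
        exact (Functor.map_comp_apply T.toFunctor (↾f.toFun) (↾g.toFun) m).symm
      map_β := fun m => by
        show g.toFun (f.toFun (A.β m)) = C.β (S.map (↾(g.toFun ∘ f.toFun)) m)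
        rw [f.map_β, g.map_β]
        congr 1
        exact (Functor.map_comp_apply S.toFunctor (↾f.toFun) (↾g.toFun) m).symm }
  id_comp f := by apply TensorAlgHom.ext; rfl
  comp_id f := by apply TensorAlgHom.ext; rfl
  assoc f g h := by apply TensorAlgHom.ext; rfl

/-- The forgetful functor from `(T,S)`-tensor algebras to sets. -/
def forgetTAlg (T S : Monad (Type u)) : TensorAlg T S ⥤ Type u where
  obj A := A.carrier
  map f := ↾(TensorAlgHom.toFun f)
  map_id _ := rfl
  map_comp _ _ := rfl


namespace MonadWithExcept

variable (T : Monad (Type u)) (E : Type u)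

/-- Pointwise naturality of the unit. -/
theorem eta_nat {A B : Type u} (g : A → B) (a : A) :
    T.map (↾g) (T.η.app A a) = T.η.app B (g a) :=
  (NatTrans.naturality_apply T.η (↾g) a).symm

/-- Pointwise naturality of the multiplication. -/
theorem mu_nat {A B : Type u} (g : A → B) (m : T.obj (T.obj A)) :
    T.map (↾g) (T.μ.app A m) = T.μ.app B (T.map (T.map (↾g)) m) :=
  (NatTrans.naturality_apply T.μ (↾g) m).symm

theorem mapmap {A B C : Type u} (f : A → B) (g : B → C) (m : T.obj A) :
    T.map (↾g) (T.map (↾f) m) = T.map (↾fun a => g (f a)) m :=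
  (Functor.map_comp_apply T.toFunctor (↾f) (↾g) m).symm

theorem lu {A : Type u} (m : T.obj A) :
    T.μ.app A (T.η.app (T.obj A) m) = m :=
  types_congr_hom (T.left_unit A) m

theorem ru {A : Type u} (m : T.obj A) :
    T.μ.app A (T.map (T.η.app A) m) = m :=
  types_congr_hom (T.right_unit A) m

theorem assoc' {A : Type u} (m : T.obj (T.obj (T.obj A))) :
    T.μ.app A (T.map (T.μ.app A) m) = T.μ.app A (T.μ.app (T.obj A) m) :=
  types_congr_hom (T.assoc A) m

/-- `[id, η ∘ inr] : T(X ⊕ E) ⊕ E → T(X ⊕ E)`. -/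
def jmap (X : Type u) : (T.obj (X ⊕ E)) ⊕ E → T.obj (X ⊕ E) :=
  Sum.elim id fun e => T.η.app (X ⊕ E) (Sum.inr e)

end MonadWithExcept

open MonadWithExcept in
/-- The exception monad transformer applied to `T`: the monad `T(- + E)`. -/
def monadWithExcept (T : Monad (Type u)) (E : Type u) : Monad (Type u) where
  obj X := T.obj (X ⊕ E)
  map {X Y} f := T.map (↾(Sum.map f id))
  map_id X := by
    show T.map (↾(Sum.map id id)) = _
    rw [Sum.map_id_id]
    exact T.toFunctor.map_id (X ⊕ E)
  map_comp {X Y Z} f g := by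
    ext m
    show T.map (↾(Sum.map (f ≫ g) id)) m = T.map (↾(Sum.map g id)) (T.map (↾(Sum.map f id)) m)
    rw [mapmap]
    have h : Sum.map (f ≫ g) (id : E → E)
        = fun a => Sum.map g (id : E → E) (Sum.map f (id : E → E) a) := by
      funext s; cases s <;> rfl
    rw [h]
  η :=
    { app := fun X => ↾fun x => T.η.app (X ⊕ E) (Sum.inl x)
      naturality := fun X Y f => by
        ext x
        show T.η.app (Y ⊕ E) (Sum.inl (f x)) = T.map (↾(Sum.map f id)) (T.η.app (X ⊕ E) (Sum.inl x))
        rw [eta_nat]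
        rfl }
  μ :=
    { app := fun X => ↾fun m => T.μ.app (X ⊕ E) (T.map (↾(jmap T E X)) m)
      naturality := fun X Y f => by
        ext m
        show T.μ.app (Y ⊕ E) (T.map (↾(jmap T E Y)) (T.map (↾(Sum.map (T.map (↾(Sum.map f id))) id)) m))
          = T.map (↾(Sum.map f id)) (T.μ.app (X ⊕ E) (T.map (↾(jmap T E X)) m))
        rw [mapmap, mu_nat, ← Functor.map_comp_apply]
        have h : (fun a => jmap T E Y (Sum.map (T.map (↾(Sum.map f id))) id a))
            = fun a => T.map (↾(Sum.map f id)) (jmap T E X a) := by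
          funext s
          cases s with
          | inl t => rfl
          | inr e =>
            show T.η.app (Y ⊕ E) (Sum.inr e)
              = T.map (↾(Sum.map f id)) (T.η.app (X ⊕ E) (Sum.inr e))
            rw [eta_nat]
            rfl
        rw [h]
        try rfl }
  left_unit X := by
    ext m
    show T.μ.app (X ⊕ E) (T.map (↾(jmap T E X)) (T.η.app (T.obj (X ⊕ E) ⊕ E) (Sum.inl m))) = m
    rw [eta_nat]
    exact lu T m
  right_unit X := by
    ext m
    show T.μ.app (X ⊕ E)
        (T.map (↾(jmap T E X)) (T.map (↾(Sum.map (fun x => T.η.app (X ⊕ E) (Sum.inl x)) id)) m)) = m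
    rw [mapmap]
    have : (fun a => jmap T E X (Sum.map (fun x => T.η.app (X ⊕ E) (Sum.inl x)) id a))
        = ⇑(T.η.app (X ⊕ E)) := by
      funext s; cases s <;> rfl
    rw [this]
    exact ru T m
  assoc X := by
    ext m
    show T.μ.app (X ⊕ E)
        (T.map (↾(jmap T E X))
          (T.map (↾(Sum.map (fun m' => T.μ.app (X ⊕ E) (T.map (↾(jmap T E X)) m')) id)) m))
      = T.μ.app (X ⊕ E)
          (T.map (↾(jmap T E X))
            (T.μ.app (T.obj (X ⊕ E) ⊕ E) (T.map (↾(jmap T E (T.obj (X ⊕ E)))) m)))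
    rw [mapmap, mu_nat, ← Functor.map_comp_apply, ← assoc', ← Functor.map_comp_apply]
    have h : (fun a => jmap T E X
          (Sum.map (fun m' => T.μ.app (X ⊕ E) (T.map (↾(jmap T E X)) m')) id a))
        = fun a => T.μ.app (X ⊕ E) (T.map (↾(jmap T E X)) (jmap T E (T.obj (X ⊕ E)) a)) := by
      funext s
      cases s with
      | inl t => rfl
      | inr e =>
        show T.η.app (X ⊕ E) (Sum.inr e)
          = T.μ.app (X ⊕ E) (T.map (↾(jmap T E X)) (T.η.app (T.obj (X ⊕ E) ⊕ E) (Sum.inr e)))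
        rw [eta_nat, lu]
        rfl
    rw [h]
    try rfl

namespace TensorExcept

open MonadWithExcept

variable {T S : Monad (Type u)} {E : Type u}

theorem map_congr {T : Monad (Type u)} {X Y : Type u} {f g : X → Y} (h : ∀ x, f x = g x)
    (m : T.obj X) : T.map (↾f) m = T.map (↾g) m := by
  have : f = g := funext h
  rw [this]

theorem TE_map {X Y : Type u} (f : X → Y) (m : T.obj (X ⊕ E)) :
    (monadWithExcept T E).map (↾f) m = T.map (↾Sum.map f id) m := rfl

theorem TE_eta {X : Type u} (x : X) :
    (monadWithExcept T E).η.app X x = T.η.app (X ⊕ E) (Sum.inl x) := rfl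

theorem TE_mu {X : Type u} (m : T.obj (T.obj (X ⊕ E) ⊕ E)) :
    (monadWithExcept T E).μ.app X m = T.μ.app (X ⊕ E) (T.map (↾jmap T E X) m) := rfl

theorem map_inl {X Y : Type u} (g : X → Y) (p : T.obj X) :
    T.map (↾Sum.map g (id : E → E)) (T.map (↾Sum.inl) p) = T.map (↾Sum.inl) (T.map (↾g) p) := by
  rw [mapmap, mapmap]
  exact map_congr (fun a => rfl) p

/-- The designated points of a `(T(-+E),S)`-tensor algebra. -/
def pts (B : TensorAlg (monadWithExcept T E) S) : E → B.carrier :=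
  fun e => B.α (T.η.app (B.carrier ⊕ E) (Sum.inr e))

/-- The designated points are `S`-discrete. -/
theorem pts_discrete (B : TensorAlg (monadWithExcept T E) S) (e : E) {Z : Type u}
    (q : S.obj Z) : B.β (S.map (↾fun _ => pts B e) q) = pts B e := by
  have h := B.tensor_law (Y := Z) (T.η.app (Z ⊕ E) (Sum.inr e)) q (fun _ => pts B e)
  simp only [TE_map, eta_nat] at h
  exact h.symm

/-- The underlying `(T,S)`-tensor algebra of a `(T(-+E),S)`-tensor algebra. -/
def base (B : TensorAlg (monadWithExcept T E) S) : TensorAlg T S where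
  carrier := B.carrier
  α m := B.α (T.map (↾Sum.inl) m)
  β := B.β
  α_unit x := by
    show B.α (T.map (↾Sum.inl) (T.η.app B.carrier x)) = x
    rw [eta_nat]
    exact B.α_unit x
  α_mul m := by
    show B.α (T.map (↾Sum.inl) (T.μ.app B.carrier m)) =
      B.α (T.map (↾Sum.inl) (T.map (↾fun t => B.α (T.map (↾Sum.inl) t)) m))
    calc B.α (T.map (↾Sum.inl) (T.μ.app B.carrier m))
        = B.α (T.μ.app (B.carrier ⊕ E) (T.map (T.map (↾Sum.inl)) m)) :=
          congrArg B.α (mu_nat T _ m)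
      _ = B.α (T.μ.app (B.carrier ⊕ E) (T.map (↾jmap T E B.carrier)
            (T.map (↾fun t => Sum.inl (T.map (↾(Sum.inl (β := E))) t)) m))) :=
          congrArg _ (congrArg _ (by rw [mapmap]; exact map_congr (fun t => rfl) m))
      _ = B.α ((monadWithExcept T E).μ.app B.carrier
            (T.map (↾fun t => Sum.inl (T.map (↾(Sum.inl (β := E))) t)) m)) := rfl
      _ = B.α ((monadWithExcept T E).map (↾B.α)
            (T.map (↾fun t => Sum.inl (T.map (↾(Sum.inl (β := E))) t)) m)) :=
          B.α_mul _
      _ = B.α (T.map (↾Sum.map B.α id)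
            (T.map (↾fun t => Sum.inl (T.map (↾(Sum.inl (β := E))) t)) m)) := rfl
      _ = B.α (T.map (↾Sum.inl) (T.map (↾fun t => B.α (T.map (↾Sum.inl) t)) m)) :=
          congrArg B.α (by erw [mapmap, mapmap]; exact map_congr (fun t => rfl) m)
  β_unit := B.β_unit
  β_mul := B.β_mul
  tensor_law {Y Z} p q f := by
    have h := B.tensor_law (T.map (↾Sum.inl) p) q f
    simp only [TE_map, map_inl] at h
    exact h

/-- A `(T(-+E),S)`-homomorphism is a `(T,S)`-homomorphism of the underlying algebras. -/
def baseHom {B C : TensorAlg (monadWithExcept T E) S} (ψ : B ⟶ C) : base B ⟶ base C where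
  toFun := ψ.toFun
  map_α m := by
    show ψ.toFun (B.α (T.map (↾Sum.inl) m)) = C.α (T.map (↾Sum.inl) (T.map (↾ψ.toFun) m))
    erw [ψ.map_α, TE_map, map_inl]
  map_β := ψ.map_β

theorem hom_pts {B C : TensorAlg (monadWithExcept T E) S} (ψ : B ⟶ C) (e : E) :
    ψ.toFun (pts B e) = pts C e := by
  have h := ψ.map_α (T.η.app (B.carrier ⊕ E) (Sum.inr e))
  rw [TE_map, eta_nat] at h
  exact h

/-- Key absorption lemma: inside `B.α`, `Sum.inl` composed with case analysis using the
designated points agrees with `Sum.map k id`. -/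
theorem alg_elim (B : TensorAlg (monadWithExcept T E) S) {V : Type u} (k : V → B.carrier)
    (m : T.obj (V ⊕ E)) :
    B.α (T.map (↾fun w => Sum.inl (Sum.elim k (pts B) w)) m) =
      B.α (T.map (↾Sum.map k id) m) := by
  calc B.α (T.map (↾fun w => Sum.inl (Sum.elim k (pts B) w)) m)
      = B.α (T.map (↾Sum.map B.α id) (T.map (↾Sum.elim
          (fun v => Sum.inl (T.η.app (B.carrier ⊕ E) (Sum.inl (k v))))
          (fun e => Sum.inl (T.η.app (B.carrier ⊕ E) (Sum.inr e)))) m)) := by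
        erw [mapmap]
        refine congrArg B.α (map_congr ?_ m).symm
        intro w
        cases w with
        | inl v => exact congrArg Sum.inl (B.α_unit (k v))
        | inr e => rfl
    _ = B.α ((monadWithExcept T E).map (↾B.α) (T.map (↾Sum.elim
          (fun v => Sum.inl (T.η.app (B.carrier ⊕ E) (Sum.inl (k v))))
          (fun e => Sum.inl (T.η.app (B.carrier ⊕ E) (Sum.inr e)))) m)) := rfl
    _ = B.α ((monadWithExcept T E).μ.app B.carrier (T.map (↾Sum.elim
          (fun v => Sum.inl (T.η.app (B.carrier ⊕ E) (Sum.inl (k v))))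
          (fun e => Sum.inl (T.η.app (B.carrier ⊕ E) (Sum.inr e)))) m)) :=
        (B.α_mul _).symm
    _ = B.α (T.μ.app (B.carrier ⊕ E) (T.map (↾jmap T E B.carrier) (T.map (↾Sum.elim
          (fun v => Sum.inl (T.η.app (B.carrier ⊕ E) (Sum.inl (k v))))
          (fun e => Sum.inl (T.η.app (B.carrier ⊕ E) (Sum.inr e)))) m))) := rfl
    _ = B.α (T.μ.app (B.carrier ⊕ E)
          (T.map (T.η.app (B.carrier ⊕ E)) (T.map (↾Sum.map k id) m))) := by
        erw [mapmap, mapmap]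
        refine congrArg _ (congrArg _ (map_congr ?_ m))
        intro w
        cases w <;> rfl
    _ = B.α (T.map (↾Sum.map k id) m) := congrArg B.α (ru T _)

variable (F : Type u ⥤ TensorAlg T S) (adj : F ⊣ forgetTAlg T S)

variable (E) in
/-- The free `(T,S)`-tensor algebra on `X ⊕ E`. -/
def A0 (X : Type u) : TensorAlg T S := F.obj (X ⊕ E)

variable {F} (E) in
def uu (X : Type u) : X ⊕ E → (A0 E F X).carrier := adj.unit.app (X ⊕ E)

variable {X : Type u}

/-- The canonical hom from the free algebra determined by `g : X → B`. -/
def φ (B : TensorAlg (monadWithExcept T E) S) (g : X → B.carrier) :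
    A0 E F X ⟶ base B :=
  (adj.homEquiv (X ⊕ E) (base B)).symm (↾(Sum.elim g (pts B)))

theorem φ_u (B : TensorAlg (monadWithExcept T E) S) (g : X → B.carrier) (w : X ⊕ E) :
    (φ F adj B g).toFun (uu E adj X w) = Sum.elim g (pts B) w := by
  have h := (adj.homEquiv (X ⊕ E) (base B)).apply_symm_apply (↾(Sum.elim g (pts B)))
  rw [Adjunction.homEquiv_unit] at h
  exact types_congr_hom h w

theorem hom_ext {B : TensorAlg T S} (χ₁ χ₂ : A0 E F X ⟶ B)
    (h : ∀ w, χ₁.toFun (uu E adj X w) = χ₂.toFun (uu E adj X w)) : χ₁ = χ₂ := by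
  apply (adj.homEquiv (X ⊕ E) B).injective
  erw [Adjunction.homEquiv_unit, Adjunction.homEquiv_unit]
  ext w
  exact h w

variable (E X) in
def relSetoid : Setoid (A0 E F X).carrier where
  r a b := ∀ (B : TensorAlg (monadWithExcept T E) S) (g : X → B.carrier),
    (φ F adj B g).toFun a = (φ F adj B g).toFun b
  iseqv := ⟨fun _ _ _ => rfl, fun h B g => (h B g).symm, fun h h' B g => (h B g).trans (h' B g)⟩

variable (E X) in
/-- The carrier of the free `(T(-+E),S)`-tensor algebra on `X`. -/
def Q : Type u := Quotient (relSetoid E F adj X)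

variable (E X) in
def π : (A0 E F X).carrier → Q E F adj X := Quotient.mk _

variable (E X) in
noncomputable def sec : Q E F adj X → (A0 E F X).carrier := Quotient.out

theorem π_sec (qq : Q E F adj X) : π E F adj X (sec E F adj X qq) = qq :=
  Quotient.out_eq qq

def φQ (B : TensorAlg (monadWithExcept T E) S) (g : X → B.carrier) :
    Q E F adj X → B.carrier :=
  Quotient.lift (φ F adj B g).toFun fun _ _ h => h B g

theorem φQ_π (B : TensorAlg (monadWithExcept T E) S) (g : X → B.carrier)
    (a : (A0 E F X).carrier) : φQ F adj B g (π E F adj X a) = (φ F adj B g).toFun a := rfl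

theorem φ_sec (B : TensorAlg (monadWithExcept T E) S) (g : X → B.carrier)
    (qq : Q E F adj X) : (φ F adj B g).toFun (sec E F adj X qq) = φQ F adj B g qq := by
  rw [← φQ_π, π_sec]

/-- Congruence of the quotient relation w.r.t. the `T`-structure. -/
theorem congr_α {W : Type u} (f f' : W → (A0 E F X).carrier)
    (hf : ∀ w, π E F adj X (f w) = π E F adj X (f' w)) (m : T.obj W) :
    π E F adj X ((A0 E F X).α (T.map (↾f) m)) = π E F adj X ((A0 E F X).α (T.map (↾f') m)) := by
  apply Quotient.sound
  intro B g
  rw [(φ F adj B g).map_α, (φ F adj B g).map_α, mapmap, mapmap]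
  exact congrArg _ (map_congr (fun w => Quotient.exact (hf w) B g) m)

/-- Congruence of the quotient relation w.r.t. the `S`-structure. -/
theorem congr_β {W : Type u} (f f' : W → (A0 E F X).carrier)
    (hf : ∀ w, π E F adj X (f w) = π E F adj X (f' w)) (m : S.obj W) :
    π E F adj X ((A0 E F X).β (S.map (↾f) m)) = π E F adj X ((A0 E F X).β (S.map (↾f') m)) := by
  apply Quotient.sound
  intro B g
  rw [(φ F adj B g).map_β, (φ F adj B g).map_β, mapmap, mapmap]
  exact congrArg _ (map_congr (fun w => Quotient.exact (hf w) B g) m)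


variable (E X) in
noncomputable def dd : (Q E F adj X ⊕ E) → (A0 E F X).carrier :=
  Sum.elim (sec E F adj X) (fun e => uu E adj X (Sum.inr e))

theorem gen_discrete (e : E) {Z : Type u} (q : S.obj Z) :
    π E F adj X ((A0 E F X).β (S.map (↾fun _ => uu E adj X (Sum.inr e)) q)) =
      π E F adj X (uu E adj X (Sum.inr e)) := by
  apply Quotient.sound
  intro B g
  erw [(φ F adj B g).map_β, mapmap,
    map_congr (g := fun _ => pts B e) (fun _ => φ_u F adj B g (Sum.inr e)) q]
  show B.β (S.map (↾fun _ => pts B e) q) = (φ F adj B g).toFun (uu E adj X (Sum.inr e))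
  rw [pts_discrete, φ_u]
  rfl

variable (E X) in
/-- The free `(T(-+E),S)`-tensor algebra on `X`. -/
noncomputable def QAlg : TensorAlg (monadWithExcept T E) S where
  carrier := Q E F adj X
  α m := π E F adj X ((A0 E F X).α (T.map (↾dd E F adj X) m))
  β m := π E F adj X ((A0 E F X).β (S.map (↾sec E F adj X) m))
  α_unit x := by
    show π E F adj X ((A0 E F X).α
      (T.map (↾dd E F adj X) (T.η.app (Q E F adj X ⊕ E) (Sum.inl x)))) = x
    rw [eta_nat]
    show π E F adj X ((A0 E F X).α (T.η.app _ (sec E F adj X x))) = x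
    rw [(A0 E F X).α_unit]
    exact π_sec F adj x
  α_mul m := by
    show π E F adj X ((A0 E F X).α (T.map (↾dd E F adj X)
        (T.μ.app _ (T.map (↾jmap T E (Q E F adj X)) m)))) =
      π E F adj X ((A0 E F X).α (T.map (↾dd E F adj X)
        (T.map (↾Sum.map _ id) m)))
    erw [mu_nat, mapmap, (A0 E F X).α_mul, mapmap, mapmap]
    refine congr_α F adj _ _ ?_ m
    intro w
    cases w with
    | inl t =>
      show π E F adj X ((A0 E F X).α (T.map (↾dd E F adj X) t)) =
        π E F adj X (sec E F adj X (π E F adj X ((A0 E F X).α (T.map (↾dd E F adj X) t))))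
      rw [π_sec]
    | inr e =>
      show π E F adj X ((A0 E F X).α
          (T.map (↾dd E F adj X) (T.η.app _ (Sum.inr e)))) =
        π E F adj X (uu E adj X (Sum.inr e))
      rw [eta_nat]
      exact congrArg _ ((A0 E F X).α_unit _)
  β_unit x := by
    show π E F adj X ((A0 E F X).β (S.map (↾sec E F adj X) (S.η.app _ x))) = x
    rw [eta_nat]
    rw [(A0 E F X).β_unit]
    exact π_sec F adj x
  β_mul m := by
    show π E F adj X ((A0 E F X).β (S.map (↾sec E F adj X) (S.μ.app _ m))) =
      π E F adj X ((A0 E F X).β (S.map (↾sec E F adj X) (S.map (↾_) m)))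
    erw [mu_nat, (A0 E F X).β_mul, mapmap, mapmap]
    refine congr_β F adj _ _ ?_ m
    intro t
    show π E F adj X ((A0 E F X).β (S.map (↾sec E F adj X) t)) =
      π E F adj X (sec E F adj X (π E F adj X ((A0 E F X).β (S.map (↾sec E F adj X) t))))
    rw [π_sec]
  tensor_law {Y Z} p q f := by
    have law := (A0 E F X).tensor_law p q
      (fun wz => Sum.elim (fun y => sec E F adj X (f (y, wz.2)))
        (fun e => uu E adj X (Sum.inr e)) wz.1)
    have step1 :
        π E F adj X ((A0 E F X).α (T.map (↾dd E F adj X)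
          (T.map (↾Sum.map (fun y => π E F adj X ((A0 E F X).β
            (S.map (↾sec E F adj X) (S.map (↾fun z => f (y, z)) q)))) id) p))) =
        π E F adj X ((A0 E F X).α (T.map (↾fun w => (A0 E F X).β
          (S.map (↾fun z => Sum.elim (fun y => sec E F adj X (f (y, z)))
            (fun e => uu E adj X (Sum.inr e)) w) q)) p)) := by
      erw [mapmap]
      refine congr_α F adj _ _ ?_ p
      intro w
      cases w with
      | inl y =>
        show π E F adj X (sec E F adj X (π E F adj X ((A0 E F X).β
            (S.map (↾sec E F adj X) (S.map (↾fun z => f (y, z)) q))))) = _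
        rw [π_sec, mapmap]
        exact congrArg _ (congrArg _ (map_congr (T := S) (fun z => rfl) q))
      | inr e =>
        exact (gen_discrete F adj e q).symm
    have step3 :
        π E F adj X ((A0 E F X).β (S.map (↾fun z => (A0 E F X).α
          (T.map (↾fun w => Sum.elim (fun y => sec E F adj X (f (y, z)))
            (fun e => uu E adj X (Sum.inr e)) w) p)) q)) =
        π E F adj X ((A0 E F X).β (S.map (↾sec E F adj X)
          (S.map (↾fun z => π E F adj X ((A0 E F X).α (T.map (↾dd E F adj X)
            (T.map (↾Sum.map (fun y => f (y, z)) id) p)))) q))) := by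
      rw [mapmap S]
      refine congr_β F adj _ _ ?_ q
      intro z
      erw [π_sec, mapmap]
      exact congrArg _ (congrArg _ (map_congr (T := T) (fun w => by cases w <;> rfl) p))
    exact step1.trans ((congrArg _ law).trans step3)

theorem pts_QAlg (e : E) :
    pts (QAlg E F adj X) e = π E F adj X (uu E adj X (Sum.inr e)) := by
  show π E F adj X ((A0 E F X).α
      (T.map (↾dd E F adj X) (T.η.app (Q E F adj X ⊕ E) (Sum.inr e)))) = _
  rw [eta_nat]
  exact congrArg _ ((A0 E F X).α_unit _)

noncomputable def πHom : A0 E F X ⟶ base (QAlg E F adj X) where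
  toFun := π E F adj X
  map_α m := by
    show π E F adj X ((A0 E F X).α m) =
      π E F adj X ((A0 E F X).α (T.map (↾dd E F adj X)
        (T.map (↾Sum.inl) (T.map (↾π E F adj X) m))))
    rw [mapmap, mapmap]
    calc π E F adj X ((A0 E F X).α m)
        = π E F adj X ((A0 E F X).α (T.map (↾fun a => a) m)) := by
          rw [show T.map (↾fun a : (A0 E F X).carrier => a) m = m from
            Functor.map_id_apply T.toFunctor _ m]
      _ = _ := congr_α F adj _ _ (fun a => (π_sec F adj (π E F adj X a)).symm) m
  map_β m := by
    show π E F adj X ((A0 E F X).β m) =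
      π E F adj X ((A0 E F X).β (S.map (↾sec E F adj X) (S.map (↾π E F adj X) m)))
    rw [mapmap]
    calc π E F adj X ((A0 E F X).β m)
        = π E F adj X ((A0 E F X).β (S.map (↾fun a => a) m)) := by
          rw [show S.map (↾fun a : (A0 E F X).carrier => a) m = m from
            Functor.map_id_apply S.toFunctor _ m]
      _ = _ := congr_β F adj _ _ (fun a => (π_sec F adj (π E F adj X a)).symm) m

noncomputable def extend (B : TensorAlg (monadWithExcept T E) S) (g : X → B.carrier) :
    QAlg E F adj X ⟶ B where
  toFun := φQ F adj B g
  map_α m := by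
    show φQ F adj B g (π E F adj X ((A0 E F X).α (T.map (↾dd E F adj X) m))) =
      B.α (T.map (↾Sum.map (φQ F adj B g) id) m)
    rw [φQ_π, (φ F adj B g).map_α]
    show B.α (T.map (↾Sum.inl) (T.map (↾(φ F adj B g).toFun) (T.map (↾dd E F adj X) m))) = _
    erw [mapmap, mapmap, ← alg_elim B (φQ F adj B g) m]
    refine congrArg B.α (map_congr (T := T) ?_ m)
    intro w
    cases w with
    | inl qq => exact congrArg Sum.inl (φ_sec F adj B g qq)
    | inr e => exact congrArg Sum.inl (φ_u F adj B g (Sum.inr e))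
  map_β m := by
    show φQ F adj B g (π E F adj X ((A0 E F X).β (S.map (↾sec E F adj X) m))) =
      B.β (S.map (↾φQ F adj B g) m)
    rw [φQ_π, (φ F adj B g).map_β]
    show B.β (S.map (↾(φ F adj B g).toFun) (S.map (↾sec E F adj X) m)) = _
    erw [mapmap]
    exact congrArg B.β (map_congr (fun qq => φ_sec F adj B g qq) m)

variable (E X) in
/-- The universal property of `QAlg`. -/
noncomputable def homEquiv (B : TensorAlg (monadWithExcept T E) S) :
    (QAlg E F adj X ⟶ B) ≃ (X ⟶ (forgetTAlg (monadWithExcept T E) S).obj B) where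
  toFun ψ := ↾fun x => ψ.toFun (π E F adj X (uu E adj X (Sum.inl x)))
  invFun g := extend F adj B ⇑g
  left_inv ψ := by
    apply TensorAlgHom.ext
    have key : φ F adj B (fun x => ψ.toFun (π E F adj X (uu E adj X (Sum.inl x)))) =
        πHom F adj ≫ baseHom ψ := by
      apply hom_ext F adj
      intro w
      rw [φ_u]
      cases w with
      | inl x => rfl
      | inr e =>
        show pts B e = ψ.toFun (π E F adj X (uu E adj X (Sum.inr e)))
        rw [← pts_QAlg F adj e]
        exact (hom_pts ψ e).symm
    funext qq
    show φQ F adj B _ qq = ψ.toFun qq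
    calc φQ F adj B _ qq
        = φQ F adj B _ (π E F adj X (sec E F adj X qq)) := by erw [π_sec]; rfl
      _ = ψ.toFun (π E F adj X (sec E F adj X qq)) :=
          congrFun (congrArg TensorAlgHom.toFun key) (sec E F adj X qq)
      _ = ψ.toFun qq := by erw [π_sec]
  right_inv g := by
    ext x
    show φQ F adj B g (π E F adj X (uu E adj X (Sum.inl x))) = g x
    erw [φQ_π, φ_u]
    rfl

end TensorExcept

open TensorExcept in
/-- Proposition 3.7(2): if the tensor `T ⊗ S` exists, then so does `T(- + E) ⊗ S`. -/
theorem tensor_exists_withExcept (T S : Monad (Type u)) (E : Type u)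
    (h : ∃ F : Type u ⥤ TensorAlg T S, Nonempty (F ⊣ forgetTAlg T S)) :
    ∃ F : Type u ⥤ TensorAlg (monadWithExcept T E) S,
      Nonempty (F ⊣ forgetTAlg (monadWithExcept T E) S) := by
  obtain ⟨F, ⟨adj⟩⟩ := h
  exact ⟨_, ⟨Adjunction.adjunctionOfEquivLeft
    (fun X B => homEquiv E F adj X B) (fun X B B' g ψ => rfl)⟩⟩
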